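/- Let G be a graph with a bridge uv, and let B(G,uv) be the graph obtained by subdividing the edge uv twice (replacing edge uv by a path u–x–y–v with two new vertices x, y). Then B(G,uv) is a nut graph if and only if G is a nut graph. -/

import Mathlib

open Matrix

attribute [local instance] Classical.propDecidable

/-- A nut graph: a connected simple graph whose adjacency matrix has a
one-dimensional kernel spanned by a vector with all entries nonzero. -/
def IsNutGraph {V : Type*} [Fintype V] (G : SimpleGraph V) : Prop :=
  G.Connected ∧ ∃ x : V → ℝ,
    G.adjMatrix ℝ *ᵥ x = 0 ∧ (∀ v, x v ≠ 0) ∧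
    ∀ y : V → ℝ, G.adjMatrix ℝ *ᵥ y = 0 → ∃ c : ℝ, y = c • x

/-- The bridge construction `B(G, uv)`: insert two new vertices `x = inr 0` and
`y = inr 1` on the edge `uv`, replacing it by the path `u–x–y–v`. -/
def bridgeExt {V : Type*} (G : SimpleGraph V) (u v : V) : SimpleGraph (V ⊕ Fin 2) where
  Adj a b := match a, b with
    | Sum.inl a, Sum.inl b => G.Adj a b ∧ ¬(a = u ∧ b = v) ∧ ¬(a = v ∧ b = u)
    | Sum.inl a, Sum.inr i => (a = u ∧ i = 0) ∨ (a = v ∧ i = 1)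
    | Sum.inr i, Sum.inl a => (a = u ∧ i = 0) ∨ (a = v ∧ i = 1)
    | Sum.inr i, Sum.inr j => i ≠ j
  symm := by
    constructor
    rintro (a | i) (b | j) h
    · exact ⟨h.1.symm, fun hc => h.2.2 ⟨hc.2, hc.1⟩, fun hc => h.2.1 ⟨hc.2, hc.1⟩⟩
    · exact h
    · exact h
    · exact h.symm
  loopless := by
    constructor
    rintro (a | i) h
    · exact G.irrefl h.1
    · exact h rfl

namespace BridgeAux

open SimpleGraph Sum

variable {V : Type*} (G : SimpleGraph V) (u v : V)

/-- sign: -1 on the `u` side of the bridge, `1` elsewhere. -/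
noncomputable def sgn (a : V) : ℝ :=
  if (G \ SimpleGraph.fromEdgeSet {s(u,v)}).Reachable u a then -1 else 1

variable {G u v}

lemma sgn_ne_zero (a : V) : sgn G u v a ≠ 0 := by
  unfold sgn; split <;> norm_num

lemma sgn_sq (a : V) : sgn G u v a * sgn G u v a = 1 := by
  unfold sgn; split <;> norm_num

lemma sgn_u : sgn G u v u = -1 := if_pos (SimpleGraph.Reachable.refl u)

lemma sgn_v (hbridge : G.IsBridge s(u, v)) : sgn G u v v = 1 :=
  if_neg (SimpleGraph.isBridge_iff.mp hbridge)

lemma sgn_adj {a b : V} (hab : (G \ SimpleGraph.fromEdgeSet {s(u,v)}).Adj a b) :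
    sgn G u v a = sgn G u v b := by
  unfold sgn
  by_cases h : (G \ SimpleGraph.fromEdgeSet {s(u,v)}).Reachable u a
  · rw [if_pos h, if_pos (h.trans hab.reachable)]
  · rw [if_neg h, if_neg (fun h' => h (h'.trans hab.symm.reachable))]

lemma adj_inl_inl {a b : V} :
    (bridgeExt G u v).Adj (Sum.inl a) (Sum.inl b)
      ↔ (G \ SimpleGraph.fromEdgeSet {s(u,v)}).Adj a b := by
  show (G.Adj a b ∧ ¬(a = u ∧ b = v) ∧ ¬(a = v ∧ b = u)) ↔ _
  simp only [SimpleGraph.sdiff_adj, SimpleGraph.fromEdgeSet_adj, Set.mem_singleton_iff,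
    Sym2.eq_iff]
  constructor
  · rintro ⟨h, h1, h2⟩
    exact ⟨h, fun hc => hc.1.elim h1 h2⟩
  · rintro ⟨h, hn⟩
    exact ⟨h, fun hc => hn ⟨Or.inl hc, h.ne⟩, fun hc => hn ⟨Or.inr hc, h.ne⟩⟩

lemma adj_inl_inr0 {a : V} :
    (bridgeExt G u v).Adj (Sum.inl a) (Sum.inr 0) ↔ a = u := by
  show (a = u ∧ (0:Fin 2) = 0) ∨ (a = v ∧ (0:Fin 2) = 1) ↔ a = u
  simp

lemma adj_inl_inr1 {a : V} :
    (bridgeExt G u v).Adj (Sum.inl a) (Sum.inr 1) ↔ a = v := by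
  show (a = u ∧ (1:Fin 2) = 0) ∨ (a = v ∧ (1:Fin 2) = 1) ↔ a = v
  simp

lemma adj_inr0_inl {b : V} :
    (bridgeExt G u v).Adj (Sum.inr 0) (Sum.inl b) ↔ b = u := by
  show (b = u ∧ (0:Fin 2) = 0) ∨ (b = v ∧ (0:Fin 2) = 1) ↔ b = u
  simp

lemma adj_inr1_inl {b : V} :
    (bridgeExt G u v).Adj (Sum.inr 1) (Sum.inl b) ↔ b = v := by
  show (b = u ∧ (1:Fin 2) = 0) ∨ (b = v ∧ (1:Fin 2) = 1) ↔ b = v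
  simp


variable [Fintype V]
lemma Gmv (x : V → ℝ) (a : V) :
    (G.adjMatrix ℝ *ᵥ x) a = ∑ b, if G.Adj a b then x b else 0 := by
  simp [Matrix.mulVec, dotProduct, SimpleGraph.adjMatrix_apply, ite_mul]

lemma Bmv_inl (z : V ⊕ Fin 2 → ℝ) (a : V) :
    ((bridgeExt G u v).adjMatrix ℝ *ᵥ z) (Sum.inl a)
      = (∑ b, if (G \ SimpleGraph.fromEdgeSet {s(u,v)}).Adj a b then z (Sum.inl b) else 0)
        + ((if a = u then z (Sum.inr 0) else 0) + (if a = v then z (Sum.inr 1) else 0)) := by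
  simp only [Matrix.mulVec, dotProduct, SimpleGraph.adjMatrix_apply,
    Fintype.sum_sum_type, Fin.sum_univ_two, ite_mul, one_mul, zero_mul]
  rw [Finset.sum_congr rfl (fun b _ => by rw [show ((if (bridgeExt G u v).Adj (Sum.inl a) (Sum.inl b) then z (Sum.inl b) else 0) : ℝ) = (if (G \ SimpleGraph.fromEdgeSet {s(u,v)}).Adj a b then z (Sum.inl b) else 0) from by simp [adj_inl_inl]])]
  congr 1
  rw [show ((if (bridgeExt G u v).Adj (Sum.inl a) (Sum.inr 0) then z (Sum.inr 0) else 0) : ℝ)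
      = (if a = u then z (Sum.inr 0) else 0) from by simp [adj_inl_inr0],
    show ((if (bridgeExt G u v).Adj (Sum.inl a) (Sum.inr 1) then z (Sum.inr 1) else 0) : ℝ)
      = (if a = v then z (Sum.inr 1) else 0) from by simp [adj_inl_inr1]]

lemma Bmv_inr0 (z : V ⊕ Fin 2 → ℝ) :
    ((bridgeExt G u v).adjMatrix ℝ *ᵥ z) (Sum.inr 0) = z (Sum.inl u) + z (Sum.inr 1) := by
  simp only [Matrix.mulVec, dotProduct, SimpleGraph.adjMatrix_apply,
    Fintype.sum_sum_type, Fin.sum_univ_two, ite_mul, one_mul, zero_mul]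
  rw [Finset.sum_congr rfl (fun b _ => by
    rw [show ((if (bridgeExt G u v).Adj (Sum.inr 0) (Sum.inl b) then z (Sum.inl b) else 0) : ℝ)
      = (if b = u then z (Sum.inl b) else 0) from by simp [adj_inr0_inl]])]
  rw [Finset.sum_ite_eq' Finset.univ u (fun b => z (Sum.inl b))]
  have h1 : (bridgeExt G u v).Adj (Sum.inr 0) (Sum.inr 0) ↔ False := by
    simp [SimpleGraph.irrefl]
  have h2 : (bridgeExt G u v).Adj (Sum.inr 0) (Sum.inr 1) := by
    show (0 : Fin 2) ≠ 1; decide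
  simp [h2]

lemma Bmv_inr1 (z : V ⊕ Fin 2 → ℝ) :
    ((bridgeExt G u v).adjMatrix ℝ *ᵥ z) (Sum.inr 1) = z (Sum.inl v) + z (Sum.inr 0) := by
  simp only [Matrix.mulVec, dotProduct, SimpleGraph.adjMatrix_apply,
    Fintype.sum_sum_type, Fin.sum_univ_two, ite_mul, one_mul, zero_mul]
  rw [Finset.sum_congr rfl (fun b _ => by
    rw [show ((if (bridgeExt G u v).Adj (Sum.inr 1) (Sum.inl b) then z (Sum.inl b) else 0) : ℝ)
      = (if b = v then z (Sum.inl b) else 0) from by simp [adj_inr1_inl]])]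
  rw [Finset.sum_ite_eq' Finset.univ v (fun b => z (Sum.inl b))]
  have h2 : (bridgeExt G u v).Adj (Sum.inr 1) (Sum.inr 0) := by
    show (1 : Fin 2) ≠ 0; decide
  simp [h2]

lemma sum_H (huv : G.Adj u v) (w : V → ℝ) (a : V) :
    (∑ b, if G.Adj a b then w b else 0)
      = (∑ b, if (G \ SimpleGraph.fromEdgeSet {s(u,v)}).Adj a b then w b else 0)
        + ((if a = u then w v else 0) + (if a = v then w u else 0)) := by
  have hne : u ≠ v := huv.ne
  by_cases hau : a = u
  · subst hau
    rw [if_pos rfl, if_neg hne]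
    have key : ∀ b, (if G.Adj a b then w b else 0)
        = (if (G \ SimpleGraph.fromEdgeSet {s(a,v)}).Adj a b then w b else 0)
          + (if b = v then w v else 0) := by
      intro b
      by_cases hbv : b = v
      · subst hbv
        rw [if_pos rfl, if_pos huv, if_neg, zero_add]
        simp [SimpleGraph.sdiff_adj, SimpleGraph.fromEdgeSet_adj, huv, huv.ne]
      · rw [if_neg hbv, add_zero]
        congr 1
        simp only [SimpleGraph.sdiff_adj, SimpleGraph.fromEdgeSet_adj, Set.mem_singleton_iff,
          Sym2.eq_iff, eq_iff_iff]
        constructor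
        · intro h; exact ⟨h, fun hc => by
            rcases hc.1 with ⟨_, h2⟩ | ⟨h1, h2⟩
            · exact hbv h2
            · exact hne h1⟩
        · exact fun h => h.1
    rw [Finset.sum_congr rfl (fun b _ => key b), Finset.sum_add_distrib,
      Finset.sum_ite_eq' Finset.univ v (fun _ => w v), if_pos (Finset.mem_univ v)]
    ring
  · by_cases hav : a = v
    · subst hav
      rw [if_neg hau, if_pos rfl]
      have key : ∀ b, (if G.Adj a b then w b else 0)
          = (if (G \ SimpleGraph.fromEdgeSet {s(u,a)}).Adj a b then w b else 0)
            + (if b = u then w u else 0) := by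
        intro b
        by_cases hbu : b = u
        · subst hbu
          rw [if_pos rfl, if_pos huv.symm, if_neg, zero_add]
          simp [SimpleGraph.sdiff_adj, SimpleGraph.fromEdgeSet_adj, huv.symm, huv.ne']
        · rw [if_neg hbu, add_zero]
          congr 1
          simp only [SimpleGraph.sdiff_adj, SimpleGraph.fromEdgeSet_adj, Set.mem_singleton_iff,
            Sym2.eq_iff, eq_iff_iff]
          constructor
          · intro h; exact ⟨h, fun hc => by
              rcases hc.1 with ⟨h1, h2⟩ | ⟨h1, h2⟩
              · exact hau h1
              · exact hbu h2⟩
          · exact fun h => h.1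
      rw [Finset.sum_congr rfl (fun b _ => key b), Finset.sum_add_distrib,
        Finset.sum_ite_eq' Finset.univ u (fun _ => w u), if_pos (Finset.mem_univ u)]
      ring
    · rw [if_neg hau, if_neg hav, add_zero, add_zero]
      apply Finset.sum_congr rfl
      intro b _
      congr 1
      simp only [SimpleGraph.sdiff_adj, SimpleGraph.fromEdgeSet_adj, Set.mem_singleton_iff,
        Sym2.eq_iff, eq_iff_iff]
      constructor
      · intro h; exact ⟨h, fun hc => by
          rcases hc.1 with ⟨h1, _⟩ | ⟨h1, _⟩
          · exact hau h1
          · exact hav h1⟩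
      · exact fun h => h.1


noncomputable def zvec (G : SimpleGraph V) (u v : V) (x : V → ℝ) : V ⊕ Fin 2 → ℝ :=
  Sum.elim (fun a => sgn G u v a * x a) ![-x v, x u]

lemma kerB (huv : G.Adj u v) (hbridge : G.IsBridge s(u,v)) {x : V → ℝ}
    (hx : G.adjMatrix ℝ *ᵥ x = 0) :
    (bridgeExt G u v).adjMatrix ℝ *ᵥ zvec G u v x = 0 := by
  have hx' : ∀ a, (∑ b, if G.Adj a b then x b else 0) = 0 := fun a => by
    rw [← Gmv]; exact congrFun hx a
  funext p
  rcases p with a | i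
  · rw [Pi.zero_apply, Bmv_inl]
    have hsum : (∑ b, if (G \ SimpleGraph.fromEdgeSet {s(u,v)}).Adj a b
          then zvec G u v x (Sum.inl b) else 0)
        = sgn G u v a * ∑ b, if (G \ SimpleGraph.fromEdgeSet {s(u,v)}).Adj a b then x b else 0 := by
      rw [Finset.mul_sum]
      apply Finset.sum_congr rfl
      intro b _
      by_cases h : (G \ SimpleGraph.fromEdgeSet {s(u,v)}).Adj a b
      · rw [if_pos h, if_pos h]
        simp only [zvec, Sum.elim_inl]
        rw [sgn_adj h]
      · rw [if_neg h, if_neg h, mul_zero]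
    have hHsum : (∑ b, if (G \ SimpleGraph.fromEdgeSet {s(u,v)}).Adj a b then x b else 0)
        = -((if a = u then x v else 0) + (if a = v then x u else 0)) := by
      have := sum_H huv x a
      rw [hx' a] at this
      linarith
    rw [hsum, hHsum]
    have hz0 : zvec G u v x (Sum.inr 0) = -x v := by simp [zvec]
    have hz1 : zvec G u v x (Sum.inr 1) = x u := by simp [zvec]
    rw [hz0, hz1]
    by_cases hau : a = u
    · subst hau
      simp only [if_pos rfl, if_neg huv.ne, sgn_u] <;> simp [huv.ne, sgn_u] <;> ring
    · by_cases hav : a = v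
      · subst hav
        simp [hau, sgn_v hbridge] <;> ring
      · simp [hau, hav] <;> ring
  · fin_cases i
    · show ((bridgeExt G u v).adjMatrix ℝ *ᵥ zvec G u v x) (Sum.inr 0) = (0 : (V ⊕ Fin 2) → ℝ) (Sum.inr 0)
      rw [Pi.zero_apply, Bmv_inr0]
      simp only [zvec, Sum.elim_inl, Sum.elim_inr, Matrix.cons_val_one, Matrix.cons_val_zero,
        Matrix.head_cons]
      rw [sgn_u]; ring
    · show ((bridgeExt G u v).adjMatrix ℝ *ᵥ zvec G u v x) (Sum.inr 1) = (0 : (V ⊕ Fin 2) → ℝ) (Sum.inr 1)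
      rw [Pi.zero_apply, Bmv_inr1]
      simp only [zvec, Sum.elim_inl, Sum.elim_inr, Matrix.cons_val_one, Matrix.cons_val_zero,
        Matrix.head_cons]
      rw [sgn_v hbridge]; ring

lemma kerG (huv : G.Adj u v) (hbridge : G.IsBridge s(u,v)) {z : V ⊕ Fin 2 → ℝ}
    (hz : (bridgeExt G u v).adjMatrix ℝ *ᵥ z = 0) :
    G.adjMatrix ℝ *ᵥ (fun a => sgn G u v a * z (Sum.inl a)) = 0 := by
  have e0 : z (Sum.inl u) + z (Sum.inr 1) = 0 := by
    have := congrFun hz (Sum.inr 0); rw [Bmv_inr0] at this; exact this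
  have e1 : z (Sum.inl v) + z (Sum.inr 0) = 0 := by
    have := congrFun hz (Sum.inr 1); rw [Bmv_inr1] at this; exact this
  have eA : ∀ a, (∑ b, if (G \ SimpleGraph.fromEdgeSet {s(u,v)}).Adj a b then z (Sum.inl b) else 0)
      = -((if a = u then z (Sum.inr 0) else 0) + (if a = v then z (Sum.inr 1) else 0)) := by
    intro a
    have := congrFun hz (Sum.inl a); rw [Bmv_inl, Pi.zero_apply] at this
    linarith
  funext a
  rw [Pi.zero_apply, Gmv, sum_H huv (fun b => sgn G u v b * z (Sum.inl b)) a]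
  have hsum : (∑ b, if (G \ SimpleGraph.fromEdgeSet {s(u,v)}).Adj a b
        then sgn G u v b * z (Sum.inl b) else 0)
      = sgn G u v a * ∑ b, if (G \ SimpleGraph.fromEdgeSet {s(u,v)}).Adj a b
        then z (Sum.inl b) else 0 := by
    rw [Finset.mul_sum]
    apply Finset.sum_congr rfl
    intro b _
    by_cases h : (G \ SimpleGraph.fromEdgeSet {s(u,v)}).Adj a b
    · rw [if_pos h, if_pos h, sgn_adj h]
    · rw [if_neg h, if_neg h, mul_zero]
  rw [hsum, eA a]
  by_cases hau : a = u
  · subst hau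
    simp [huv.ne, sgn_u, sgn_v hbridge] <;> linarith
  · by_cases hav : a = v
    · subst hav
      simp [hau, sgn_u, sgn_v hbridge] <;> linarith
    · simp [hau, hav]

end BridgeAux

namespace BridgeAux
open SimpleGraph Sum
variable {V : Type*} {G : SimpleGraph V} {u v : V}

lemma adj_ux : (bridgeExt G u v).Adj (Sum.inl u) (Sum.inr 0) := Or.inl ⟨rfl, rfl⟩
lemma adj_xy : (bridgeExt G u v).Adj (Sum.inr 0) (Sum.inr 1) := by
  show (0 : Fin 2) ≠ 1; decide
lemma adj_yv : (bridgeExt G u v).Adj (Sum.inr 1) (Sum.inl v) := Or.inr ⟨rfl, rfl⟩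

lemma reach_step (hadj : G.Adj a b) :
    (bridgeExt G u v).Reachable (Sum.inl a) (Sum.inl b) := by
  by_cases h1 : a = u ∧ b = v
  · obtain ⟨rfl, rfl⟩ := h1
    exact (adj_ux.reachable.trans adj_xy.reachable).trans adj_yv.reachable
  · by_cases h2 : a = v ∧ b = u
    · obtain ⟨rfl, rfl⟩ := h2
      exact ((adj_ux.reachable.trans adj_xy.reachable).trans adj_yv.reachable).symm
    · exact (SimpleGraph.Adj.reachable (show (bridgeExt G u v).Adj (Sum.inl a) (Sum.inl b)
        from ⟨hadj, h1, h2⟩))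

lemma reach_lift {a b : V} (h : G.Reachable a b) :
    (bridgeExt G u v).Reachable (Sum.inl a) (Sum.inl b) := by
  obtain ⟨p⟩ := h
  induction p with
  | nil => exact SimpleGraph.Reachable.refl _
  | @cons c d e hadj p ih => exact (reach_step hadj).trans ih

lemma reach_proj (huv : G.Adj u v) {p q : V ⊕ Fin 2}
    (h : (bridgeExt G u v).Reachable p q) :
    G.Reachable (Sum.elim id (fun _ => u) p) (Sum.elim id (fun _ => u) q) := by
  obtain ⟨w⟩ := h
  induction w with
  | nil => exact SimpleGraph.Reachable.refl _
  | @cons p q r hadj w ih =>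
    refine SimpleGraph.Reachable.trans ?_ ih
    rcases p with a | i <;> rcases q with b | j
    · exact hadj.1.reachable
    · rcases hadj with ⟨rfl, _⟩ | ⟨rfl, _⟩
      · exact SimpleGraph.Reachable.refl _
      · exact huv.symm.reachable
    · rcases hadj with ⟨rfl, _⟩ | ⟨rfl, _⟩
      · exact SimpleGraph.Reachable.refl _
      · exact huv.reachable
    · exact SimpleGraph.Reachable.refl _

lemma conn_iff (huv : G.Adj u v) : (bridgeExt G u v).Connected ↔ G.Connected := by
  rw [SimpleGraph.connected_iff, SimpleGraph.connected_iff]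
  constructor
  · rintro ⟨hpre, -⟩
    exact ⟨fun a b => reach_proj huv (hpre (Sum.inl a) (Sum.inl b)), ⟨u⟩⟩
  · rintro ⟨hpre, -⟩
    have key : ∀ p : V ⊕ Fin 2, (bridgeExt G u v).Reachable p (Sum.inl u) := by
      rintro (a | i)
      · exact reach_lift (hpre a u)
      · fin_cases i
        · exact (SimpleGraph.Adj.reachable (adj_ux (G := G))).symm
        · exact ((adj_xy (G := G) (u := u) (v := v)).reachable.symm.trans
            (SimpleGraph.Adj.reachable (adj_ux (G := G))).symm)
    exact ⟨fun p q => (key p).trans (key q).symm, ⟨Sum.inr 0⟩⟩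

end BridgeAux

open BridgeAux

/-- Inserting two vertices on a bridge `uv` of `G` yields a nut graph
if and only if `G` is a nut graph. -/
theorem bridgeExt_nut_iff {V : Type*} [Fintype V] (G : SimpleGraph V) (u v : V)
    (huv : G.Adj u v) (hbridge : G.IsBridge s(u, v)) :
    IsNutGraph (bridgeExt G u v) ↔ IsNutGraph G := by
  constructor
  · rintro ⟨hconn, z, hker, hnz, hspan⟩
    refine ⟨(conn_iff huv).mp hconn, fun a => sgn G u v a * z (Sum.inl a),
      kerG huv hbridge hker, fun a => mul_ne_zero (sgn_ne_zero a) (hnz _), ?_⟩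
    intro w hw
    obtain ⟨c, hc⟩ := hspan (zvec G u v w) (kerB huv hbridge hw)
    refine ⟨c, funext fun a => ?_⟩
    have h1 := congrFun hc (Sum.inl a)
    simp only [zvec, Sum.elim_inl, Pi.smul_apply, smul_eq_mul] at h1
    have h2 := sgn_sq (G := G) (u := u) (v := v) a
    show w a = c * (sgn G u v a * z (Sum.inl a))
    calc w a = (sgn G u v a * sgn G u v a) * w a := by rw [h2, one_mul]
    _ = sgn G u v a * (sgn G u v a * w a) := by ring
    _ = sgn G u v a * (c * z (Sum.inl a)) := by rw [h1]
    _ = c * (sgn G u v a * z (Sum.inl a)) := by ring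
  · rintro ⟨hconn, x, hker, hnz, hspan⟩
    refine ⟨(conn_iff huv).mpr hconn, zvec G u v x, kerB huv hbridge hker, ?_, ?_⟩
    · rintro (a | i)
      · simp only [zvec, Sum.elim_inl]
        exact mul_ne_zero (sgn_ne_zero a) (hnz a)
      · fin_cases i
        · show zvec G u v x (Sum.inr 0) ≠ 0
          simpa [zvec] using hnz v
        · show zvec G u v x (Sum.inr 1) ≠ 0
          simpa [zvec] using hnz u
    · intro y hy
      obtain ⟨c, hc⟩ := hspan (fun a => sgn G u v a * y (Sum.inl a)) (kerG huv hbridge hy)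
      have hinl : ∀ a, y (Sum.inl a) = c * (sgn G u v a * x a) := by
        intro a
        have h1 := congrFun hc a
        simp only [Pi.smul_apply, smul_eq_mul] at h1
        have h2 := sgn_sq (G := G) (u := u) (v := v) a
        calc y (Sum.inl a) = (sgn G u v a * sgn G u v a) * y (Sum.inl a) := by rw [h2, one_mul]
        _ = sgn G u v a * (sgn G u v a * y (Sum.inl a)) := by ring
        _ = sgn G u v a * (c * x a) := by rw [h1]
        _ = c * (sgn G u v a * x a) := by ring
      have e0 : y (Sum.inl u) + y (Sum.inr 1) = 0 := by
        have := congrFun hy (Sum.inr 0); rw [Bmv_inr0, Pi.zero_apply] at this; exact this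
      have e1 : y (Sum.inl v) + y (Sum.inr 0) = 0 := by
        have := congrFun hy (Sum.inr 1); rw [Bmv_inr1, Pi.zero_apply] at this; exact this
      refine ⟨c, funext fun p => ?_⟩
      rcases p with a | i
      · show y (Sum.inl a) = (c • zvec G u v x) (Sum.inl a)
        simp only [Pi.smul_apply, smul_eq_mul, zvec, Sum.elim_inl]
        exact hinl a
      · fin_cases i
        · show y (Sum.inr 0) = (c • zvec G u v x) (Sum.inr 0)
          have hy0 : y (Sum.inr 0) = -y (Sum.inl v) := by linarith
          rw [hy0, hinl v, sgn_v hbridge]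
          simp [zvec]
        · show y (Sum.inr 1) = (c • zvec G u v x) (Sum.inr 1)
          have hy1 : y (Sum.inr 1) = -y (Sum.inl u) := by linarith
          rw [hy1, hinl u, sgn_u]
          simp [zvec]
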